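/- In the Closed-form SINR setting, fix E_u > 0 and E_r > 0, and for each M ≥ 1 set P_u = E_u/M and P_r = E_r/M. Define ξ = E_r / Σ_{k'=1}^K (E_u·σ_{k'-1}²σ_{k'}⁴ + σ_{k'}²σ_{k'+1}²). Then for every index k, SINR_k(M) → ξ·E_u·σ_k⁴σ_{k+1}⁴ / (ξ·σ_k⁴σ_{k+1}² + 1) as M → ∞, and hence SE_k(M) = ((T−τ)/T)·((K−1)/K)·log₂(1 + SINR_k(M)) converges to ((T−τ)/T)·((K−1)/K)·log₂(1 + ξ·E_u·σ_k⁴σ_{k+1}⁴ / (ξ·σ_k⁴σ_{k+1}² + 1)). (Equation (35) of the paper.) -/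

import Mathlib

open Filter Finset

noncomputable section

/-- The closed-form normalization factor `α⁽¹⁾` of eq. (24) of the paper, as a function of
the number of relay antennas `M`, for estimated-channel variances `σ2` (i.e. `σ_k²`),
large-scale coefficients `β`, user power `Pu` and relay power `Pr`. -/
def alphaCF (K : ℕ) [NeZero K] (σ2 β : ZMod K → ℝ) (Pu Pr : ℝ) (M : ℕ) : ℝ :=
  Pr / ((M : ℝ) ^ 3 * Pu * (∑ k' : ZMod K, σ2 (k' - 1) * (σ2 k') ^ 2)
    + (M : ℝ) ^ 2 * (∑ k' : ZMod K, σ2 k' * σ2 (k' + 1)) * (Pu * (∑ k' : ZMod K, β k') + 1)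
    + (M : ℝ) * Pu * ∑ k' : ZMod K, (σ2 k') ^ 2 * σ2 (k' + 1))

/-- `a_{k,i} = σ_k⁴ σ_{k+1}² β_i + σ_i⁴ σ_{i-1}² β_k`. -/
def aCF (K : ℕ) [NeZero K] (σ2 β : ZMod K → ℝ) (k i : ZMod K) : ℝ :=
  (σ2 k) ^ 2 * σ2 (k + 1) * β i + (σ2 i) ^ 2 * σ2 (i - 1) * β k

/-- `b_{k,i} = β_k β_i Σ_{k'} σ_{k'}² σ_{k'+1}²`. -/
def bCF (K : ℕ) [NeZero K] (σ2 β : ZMod K → ℝ) (k i : ZMod K) : ℝ :=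
  β k * β i * ∑ k' : ZMod K, σ2 k' * σ2 (k' + 1)

/-- `c_{k,i} = σ_k⁴ σ_{k-1}² β_i + σ_i⁴ σ_{i+1}² β_k`. -/
def cCF (K : ℕ) [NeZero K] (σ2 β : ZMod K → ℝ) (k i : ZMod K) : ℝ :=
  (σ2 k) ^ 2 * σ2 (k - 1) * β i + (σ2 i) ^ 2 * σ2 (i + 1) * β k

/-- `V_k(M) = M³ a_{k,k+1} + M² b_{k,k+1} + M c_{k,k+1}` (the beamforming uncertainty
variance of eq. (27)). -/
def Vcf (K : ℕ) [NeZero K] (σ2 β : ZMod K → ℝ) (k : ZMod K) (M : ℕ) : ℝ :=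
  (M : ℝ) ^ 3 * aCF K σ2 β k (k + 1) + (M : ℝ) ^ 2 * bCF K σ2 β k (k + 1)
    + (M : ℝ) * cCF K σ2 β k (k + 1)

/-- The inter-user interference term `IU_k(M)` of eq. (28). -/
def IUcf (K : ℕ) [NeZero K] (σ2 β : ZMod K → ℝ) (Pu Pr : ℝ) (k : ZMod K) (M : ℕ) : ℝ :=
  alphaCF K σ2 β Pu Pr M * Pu * (∑ i ∈ Finset.univ.erase (k + 1),
      ((M : ℝ) ^ 3 * aCF K σ2 β k i + (M : ℝ) ^ 2 * bCF K σ2 β k i + (M : ℝ) * cCF K σ2 β k i))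
  + alphaCF K σ2 β Pu Pr M * Pu * (M : ℝ) ^ 2 * (σ2 (k - 1)) ^ 2 * (σ2 k) ^ 2
  + alphaCF K σ2 β Pu Pr M * Pu * (M : ℝ) *
      (2 * (σ2 k) ^ 3 * σ2 (k + 1) + 2 * (σ2 k) ^ 3 * σ2 (k - 1)
        + (2 * (σ2 k) ^ 2 + (β k) ^ 2 - 2 * β k * σ2 k)
          * ∑ k' : ZMod K, 2 * σ2 k' * σ2 (k' + 1))

/-- The amplified-noise term `AN_k(M)` of eq. (29). -/
def ANcf (K : ℕ) [NeZero K] (σ2 β : ZMod K → ℝ) (Pu Pr : ℝ) (k : ZMod K) (M : ℕ) : ℝ :=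
  alphaCF K σ2 β Pu Pr M * ((M : ℝ) ^ 3 * (σ2 k) ^ 2 * σ2 (k + 1)
    + (M : ℝ) ^ 2 * β k * ∑ k' : ZMod K, σ2 k' * σ2 (k' + 1))

/-- The closed-form SINR of user `k` in the first time slot (Theorem 1 of the paper). -/
def sinrCF (K : ℕ) [NeZero K] (σ2 β : ZMod K → ℝ) (Pu Pr : ℝ) (k : ZMod K) (M : ℕ) : ℝ :=
  alphaCF K σ2 β Pu Pr M * Pu * (M : ℝ) ^ 4 * (σ2 k) ^ 2 * (σ2 (k + 1)) ^ 2
    / (alphaCF K σ2 β Pu Pr M * Pu * Vcf K σ2 β k M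
        + IUcf K σ2 β Pu Pr k M + ANcf K σ2 β Pu Pr k M + 1)

set_option maxHeartbeats 2000000 in
/-- with both powers scaled as `P_u = E_u/M`, `P_r = E_r/M`,
`SINR_k(M) → ξ E_u σ_k⁴ σ_{k+1}⁴ / (ξ σ_k⁴ σ_{k+1}² + 1)` where
`ξ = E_r / Σ_{k'} (E_u σ_{k'-1}² σ_{k'}⁴ + σ_{k'}² σ_{k'+1}²)`, and the spectral
efficiency converges accordingly (eq. (35)). -/
theorem sinr_limit_both_powers_scaling
    (K : ℕ) [NeZero K] (hK : 2 ≤ K)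
    (β : ZMod K → ℝ) (hβ : ∀ k, 0 < β k)
    (τ T Pp : ℝ) (hτ : (K : ℝ) ≤ τ) (hT : τ < T) (hPp : 0 < Pp)
    (σ2 : ZMod K → ℝ) (hσ2 : ∀ k, σ2 k = τ * Pp * (β k) ^ 2 / (τ * Pp * β k + 1))
    (Eu Er : ℝ) (hEu : 0 < Eu) (hEr : 0 < Er)
    (ξ : ℝ) (hξ : ξ = Er / ∑ k' : ZMod K,
      (Eu * σ2 (k' - 1) * (σ2 k') ^ 2 + σ2 k' * σ2 (k' + 1)))
    (k : ZMod K) :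
    Tendsto (fun M : ℕ => sinrCF K σ2 β (Eu / M) (Er / M) k M) atTop
      (nhds (ξ * Eu * (σ2 k) ^ 2 * (σ2 (k + 1)) ^ 2
        / (ξ * (σ2 k) ^ 2 * σ2 (k + 1) + 1))) ∧
    Tendsto (fun M : ℕ => (T - τ) / T * (((K : ℝ) - 1) / K)
        * Real.logb 2 (1 + sinrCF K σ2 β (Eu / M) (Er / M) k M)) atTop
      (nhds ((T - τ) / T * (((K : ℝ) - 1) / K) * Real.logb 2 (1 + ξ * Eu * (σ2 k) ^ 2
        * (σ2 (k + 1)) ^ 2 / (ξ * (σ2 k) ^ 2 * σ2 (k + 1) + 1)))) := by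
  classical
  have hK0 : (0:ℝ) < K := by
    have : 0 < K := Nat.pos_of_ne_zero (NeZero.ne K)
    exact_mod_cast this
  have hτ0 : 0 < τ := lt_of_lt_of_le hK0 hτ
  have hσ : ∀ j : ZMod K, 0 < σ2 j := by
    intro j
    have hb := hβ j
    rw [hσ2 j]
    positivity
  have hne : (Finset.univ : Finset (ZMod K)).Nonempty := Finset.univ_nonempty
  set S1 := ∑ k' : ZMod K, σ2 (k' - 1) * (σ2 k') ^ 2 with hS1d
  set S2 := ∑ k' : ZMod K, σ2 k' * σ2 (k' + 1) with hS2d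
  set S3 := ∑ k' : ZMod K, (σ2 k') ^ 2 * σ2 (k' + 1) with hS3d
  set Sb := ∑ k' : ZMod K, β k' with hSbd
  set SA := ∑ i ∈ Finset.univ.erase (k + 1), aCF K σ2 β k i with hSAd
  set SBk := ∑ i ∈ Finset.univ.erase (k + 1), bCF K σ2 β k i with hSBd
  set SCk := ∑ i ∈ Finset.univ.erase (k + 1), cCF K σ2 β k i with hSCd
  have hS1pos : 0 < S1 := Finset.sum_pos (fun i _ => by
    have h1 := hσ (i - 1); have h2 := hσ i; positivity) hne
  have hS2pos : 0 < S2 := Finset.sum_pos (fun i _ => by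
    have h1 := hσ i; have h2 := hσ (i + 1); positivity) hne
  have hS3pos : 0 < S3 := Finset.sum_pos (fun i _ => by
    have h1 := hσ i; have h2 := hσ (i + 1); positivity) hne
  have hSbpos : 0 < Sb := Finset.sum_pos (fun i _ => hβ i) hne
  have hC0pos : 0 < Eu * S1 + S2 := by positivity
  have haCF : ∀ i, 0 ≤ aCF K σ2 β k i := by
    intro i
    rw [aCF]
    have h1 := (hσ k).le; have h2 := (hσ (k + 1)).le; have h3 := (hσ i).le
    have h4 := (hσ (i - 1)).le; have h5 := (hβ i).le; have h6 := (hβ k).le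
    positivity
  have hbCF : ∀ i, 0 ≤ bCF K σ2 β k i := by
    intro i
    rw [bCF, ← hS2d]
    exact mul_nonneg (mul_nonneg (hβ k).le (hβ i).le) hS2pos.le
  have hcCF : ∀ i, 0 ≤ cCF K σ2 β k i := by
    intro i
    rw [cCF]
    have h1 := (hσ k).le; have h2 := (hσ (k - 1)).le; have h3 := (hσ i).le
    have h4 := (hσ (i + 1)).le; have h5 := (hβ i).le; have h6 := (hβ k).le
    positivity
  have hSAnn : 0 ≤ SA := Finset.sum_nonneg fun i _ => haCF i
  have hSBnn : 0 ≤ SBk := Finset.sum_nonneg fun i _ => hbCF i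
  have hSCnn : 0 ≤ SCk := Finset.sum_nonneg fun i _ => hcCF i
  have ha0 := haCF (k + 1)
  have hb0 := hbCF (k + 1)
  have hc0 := hcCF (k + 1)
  have hsk := hσ k
  have hsk1 := hσ (k + 1)
  have hskm := hσ (k - 1)
  have hbk := hβ k
  set D3 := Er * ((σ2 k) ^ 2 * σ2 (k + 1)) + (Eu * S1 + S2) with hD3d
  set D2 := Er * Eu * (aCF K σ2 β k (k + 1) + SA) + Er * β k * S2 + Eu * Sb * S2 with hD2d
  set D1 := Er * Eu * (bCF K σ2 β k (k + 1) + SBk)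
      + Er * Eu * ((σ2 (k - 1)) ^ 2 * (σ2 k) ^ 2) + Eu * S3 with hD1d
  set D0 := Er * Eu * (cCF K σ2 β k (k + 1) + SCk)
      + Er * Eu * (2 * (σ2 k) ^ 3 * σ2 (k + 1) + 2 * (σ2 k) ^ 3 * σ2 (k - 1)
        + ((σ2 k) ^ 2 + (σ2 k - β k) ^ 2) * (2 * S2)) with hD0d
  set N := Er * Eu * ((σ2 k) ^ 2 * (σ2 (k + 1)) ^ 2) with hNd
  have hD3pos : 0 < D3 := by rw [hD3d]; positivity
  have hD2nn : 0 ≤ D2 := by rw [hD2d]; positivity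
  have hD1nn : 0 ≤ D1 := by rw [hD1d]; positivity
  have hD0nn : 0 ≤ D0 := by rw [hD0d]; positivity
  have hNnn : 0 ≤ N := by rw [hNd]; positivity
  -- pointwise identity
  have heq : ∀ M : ℕ, 1 ≤ M → sinrCF K σ2 β (Eu / M) (Er / M) k M
      = N / (D3 + D2 * (M:ℝ)⁻¹ + D1 * ((M:ℝ)⁻¹) ^ 2 + D0 * ((M:ℝ)⁻¹) ^ 3) := by
    intro M hM
    have hm : (0:ℝ) < (M:ℝ) := by exact_mod_cast hM
    have hm' : (M:ℝ) ≠ 0 := ne_of_gt hm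
    have hPMpos : 0 < (M:ℝ) ^ 3 * (Eu * S1 + S2) + (M:ℝ) ^ 2 * (Eu * Sb * S2)
        + (M:ℝ) * (Eu * S3) := by positivity
    have hPM := ne_of_gt hPMpos
    have hα : alphaCF K σ2 β (Eu / M) (Er / M) M
        = Er / ((M:ℝ) ^ 3 * (Eu * S1 + S2) + (M:ℝ) ^ 2 * (Eu * Sb * S2)
            + (M:ℝ) * (Eu * S3)) := by
      rw [alphaCF, ← hS1d, ← hS2d, ← hS3d, ← hSbd, div_div]
      congr 1
      field_simp
      ring
    have hsplit : (∑ i ∈ Finset.univ.erase (k + 1),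
        ((M : ℝ) ^ 3 * aCF K σ2 β k i + (M : ℝ) ^ 2 * bCF K σ2 β k i
          + (M : ℝ) * cCF K σ2 β k i))
        = (M:ℝ) ^ 3 * SA + (M:ℝ) ^ 2 * SBk + (M:ℝ) * SCk := by
      rw [hSAd, hSBd, hSCd, Finset.mul_sum, Finset.mul_sum, Finset.mul_sum,
        ← Finset.sum_add_distrib, ← Finset.sum_add_distrib]
    have h2S2 : (∑ k' : ZMod K, 2 * σ2 k' * σ2 (k' + 1)) = 2 * S2 := by
      rw [hS2d, Finset.mul_sum]
      exact Finset.sum_congr rfl fun i _ => by ring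
    unfold sinrCF IUcf ANcf Vcf
    rw [hα, hsplit, h2S2, ← hS2d]
    rw [show 2 * (σ2 k) ^ 2 + (β k) ^ 2 - 2 * β k * σ2 k
        = (σ2 k) ^ 2 + (σ2 k - β k) ^ 2 from by ring]
    rw [div_eq_div_iff (by positivity) (by positivity)]
    rw [hNd, hD3d, hD2d, hD1d, hD0d]
    field_simp
    ring
  have ht : Tendsto (fun M : ℕ => ((M:ℝ))⁻¹) atTop (nhds 0) :=
    tendsto_inv_atTop_zero.comp tendsto_natCast_atTop_atTop
  have hdent : Tendsto (fun M : ℕ => D3 + D2 * (M:ℝ)⁻¹ + D1 * ((M:ℝ)⁻¹) ^ 2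
      + D0 * ((M:ℝ)⁻¹) ^ 3) atTop (nhds (D3 + D2 * 0 + D1 * 0 ^ 2 + D0 * 0 ^ 3)) :=
    ((tendsto_const_nhds.add (ht.const_mul D2)).add ((ht.pow 2).const_mul D1)).add
      ((ht.pow 3).const_mul D0)
  have hlim0 : Tendsto (fun M : ℕ => N / (D3 + D2 * (M:ℝ)⁻¹ + D1 * ((M:ℝ)⁻¹) ^ 2
      + D0 * ((M:ℝ)⁻¹) ^ 3)) atTop (nhds (N / D3)) := by
    have h := (tendsto_const_nhds : Tendsto (fun _ : ℕ => N) atTop (nhds N)).div hdent (by simpa using hD3pos.ne')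
    simpa [Pi.div_def] using h
  have hmain : Tendsto (fun M : ℕ => sinrCF K σ2 β (Eu / M) (Er / M) k M) atTop
      (nhds (N / D3)) := by
    apply hlim0.congr'
    filter_upwards [eventually_ge_atTop 1] with M hM
    exact (heq M hM).symm
  have hLeq : N / D3 = ξ * Eu * (σ2 k) ^ 2 * (σ2 (k + 1)) ^ 2
      / (ξ * (σ2 k) ^ 2 * σ2 (k + 1) + 1) := by
    have hC0 : (∑ k' : ZMod K, (Eu * σ2 (k' - 1) * (σ2 k') ^ 2 + σ2 k' * σ2 (k' + 1)))
        = Eu * S1 + S2 := by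
      rw [Finset.sum_add_distrib, hS1d, hS2d, Finset.mul_sum]
      congr 1
      exact Finset.sum_congr rfl fun i _ => by ring
    have hd2 : 0 < Er / (Eu * S1 + S2) * (σ2 k) ^ 2 * σ2 (k + 1) + 1 := by positivity
    rw [hξ, hC0, hNd, hD3d]
    rw [div_eq_div_iff (by positivity) hd2.ne']
    field_simp
  constructor
  · rw [← hLeq]; exact hmain
  · have hpos1 : (0:ℝ) < 1 + N / D3 := by
      have := div_nonneg hNnn hD3pos.le
      linarith
    have hadd : Tendsto (fun M : ℕ => 1 + sinrCF K σ2 β (Eu / M) (Er / M) k M) atTop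
        (nhds (1 + N / D3)) := tendsto_const_nhds.add hmain
    have hlog : Tendsto (fun M : ℕ =>
        Real.log (1 + sinrCF K σ2 β (Eu / M) (Er / M) k M)) atTop
        (nhds (Real.log (1 + N / D3))) :=
      ((Real.continuousAt_log hpos1.ne').tendsto).comp hadd
    rw [← hLeq]
    apply Tendsto.const_mul
    simp only [Real.logb]
    exact hlog.div_const _
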